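/- For every ε ∈ (0,1/2), the function φ^(ε) : [0,1] → [0,1] defined by φ^(ε)(x) = 1 − ⌊(1−x)/ε⌋/⌊1/ε⌋ for x > 1/2, φ^(ε)(x) = 1/⌊1/ε⌋ for ε ≤ x ≤ 1/2, and φ^(ε)(x) = 0 for x < ε, is a dual feasible function. -/
import Mathlib


/-- A function `u : [0,1] → [0,1]` is *dual feasible* if it maps `[0,1]` into `[0,1]`
and for every finite family `x₁, …, xₙ` of numbers in `[0,1]` with `∑ xⱼ ≤ 1`
one has `∑ u (xⱼ) ≤ 1`. -/
def DualFeasible (u : ℝ → ℝ) : Prop :=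
  (∀ x ∈ Set.Icc (0 : ℝ) 1, u x ∈ Set.Icc (0 : ℝ) 1) ∧
  ∀ (n : ℕ) (x : Fin n → ℝ), (∀ j, x j ∈ Set.Icc (0 : ℝ) 1) →
    ∑ j, x j ≤ 1 → ∑ j, u (x j) ≤ 1

open Classical in
/-- For every `ε ∈ (0,1/2)`, the function `φ^(ε)` with
`φ^(ε)(x) = 1 - ⌊(1-x)/ε⌋ / ⌊1/ε⌋` for `x > 1/2`,
`φ^(ε)(x) = 1 / ⌊1/ε⌋` for `ε ≤ x ≤ 1/2`, and `φ^(ε)(x) = 0` for `x < ε`,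
is a dual feasible function. -/
theorem phi_eps_dualFeasible (ε : ℝ) (hε : ε ∈ Set.Ioo (0 : ℝ) (1 / 2)) :
    DualFeasible (fun x : ℝ =>
      if 1 / 2 < x then 1 - (⌊(1 - x) / ε⌋ : ℝ) / (⌊1 / ε⌋ : ℝ)
      else if ε ≤ x then 1 / (⌊1 / ε⌋ : ℝ)
      else 0) := by
  obtain ⟨hε0, hε2⟩ := hε
  have hm2 : (2 : ℤ) ≤ ⌊1 / ε⌋ := by
    apply Int.le_floor.2
    rw [le_div_iff₀ hε0]
    push_cast
    linarith
  have hmR : (2 : ℝ) ≤ (⌊1 / ε⌋ : ℝ) := by exact_mod_cast hm2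
  have hmpos : (0 : ℝ) < (⌊1 / ε⌋ : ℝ) := by linarith
  constructor
  · intro y hy
    obtain ⟨hy0, hy1⟩ := hy
    by_cases h : 1 / 2 < y
    · simp only [h, if_pos]
      have hfl0 : (0 : ℤ) ≤ ⌊(1 - y) / ε⌋ := by
        apply Int.floor_nonneg.2
        apply div_nonneg _ hε0.le
        linarith
      have hfl1 : ⌊(1 - y) / ε⌋ ≤ ⌊1 / ε⌋ := by
        apply Int.floor_le_floor
        gcongr
        linarith
      constructor
      · have : ((⌊(1 - y) / ε⌋ : ℝ)) / (⌊1 / ε⌋ : ℝ) ≤ 1 := by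
          rw [div_le_one hmpos]
          exact_mod_cast hfl1
        linarith
      · have h0 : (0 : ℝ) ≤ ((⌊(1 - y) / ε⌋ : ℝ)) / (⌊1 / ε⌋ : ℝ) := by
          apply div_nonneg _ (le_of_lt hmpos)
          exact_mod_cast hfl0
        linarith
    · simp only [h, if_neg, if_false]
      by_cases h2 : ε ≤ y
      · simp only [h2, if_pos]
        constructor
        · positivity
        · rw [div_le_one hmpos]; linarith
      · simp only [h2, if_neg, if_false]
        exact ⟨le_refl 0, zero_le_one⟩
  · intro n x hx hsum
    have hx0 : ∀ j, 0 ≤ x j := fun j => (hx j).1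
    set T : Finset (Fin n) := Finset.univ.filter (fun j => 1 / 2 < x j) with hT
    have hTcard : T.card ≤ 1 := by
      by_contra hc
      push_neg at hc
      obtain ⟨a, ha, b, hb, hab⟩ := Finset.one_lt_card.1 hc
      have ha' : 1 / 2 < x a := (Finset.mem_filter.1 ha).2
      have hb' : 1 / 2 < x b := (Finset.mem_filter.1 hb).2
      have hpair : x a + x b ≤ ∑ j, x j := by
        have hsub : ({a, b} : Finset (Fin n)) ⊆ Finset.univ := Finset.subset_univ _
        have := Finset.sum_le_sum_of_subset_of_nonneg hsub
          (fun j _ _ => hx0 j)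
        rwa [Finset.sum_pair hab] at this
      linarith
    -- helper counting lemma
    have key : ∀ (s : Finset (Fin n)) (c : ℝ), 0 ≤ c →
        (∑ j ∈ s, x j) ≤ c →
        (∀ j ∈ s, ¬ (1 / 2 < x j)) →
        ∑ j ∈ s, (if 1 / 2 < x j then 1 - (⌊(1 - x j) / ε⌋ : ℝ) / (⌊1 / ε⌋ : ℝ)
          else if ε ≤ x j then 1 / (⌊1 / ε⌋ : ℝ) else 0)
          ≤ (⌊c / ε⌋ : ℝ) / (⌊1 / ε⌋ : ℝ) := by
      intro s c hc hsc hs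
      set K : Finset (Fin n) := s.filter (fun j => ε ≤ x j) with hK
      have hKcard : (K.card : ℝ) * ε ≤ c := by
        calc (K.card : ℝ) * ε = ∑ _j ∈ K, ε := by
              rw [Finset.sum_const, nsmul_eq_mul]
          _ ≤ ∑ j ∈ K, x j := by
              apply Finset.sum_le_sum
              intro j hj
              exact (Finset.mem_filter.1 hj).2
          _ ≤ ∑ j ∈ s, x j := by
              apply Finset.sum_le_sum_of_subset_of_nonneg (Finset.filter_subset _ _)
              intro j _ _
              exact hx0 j
          _ ≤ c := hsc
      have hKfl : (K.card : ℤ) ≤ ⌊c / ε⌋ := by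
        apply Int.le_floor.2
        rw [le_div_iff₀ hε0]
        exact_mod_cast hKcard
      have hKflR : (K.card : ℝ) ≤ (⌊c / ε⌋ : ℝ) := by exact_mod_cast hKfl
      calc ∑ j ∈ s, (if 1 / 2 < x j then 1 - (⌊(1 - x j) / ε⌋ : ℝ) / (⌊1 / ε⌋ : ℝ)
            else if ε ≤ x j then 1 / (⌊1 / ε⌋ : ℝ) else 0)
          = ∑ j ∈ s, (if ε ≤ x j then 1 / (⌊1 / ε⌋ : ℝ) else 0) := by
            apply Finset.sum_congr rfl
            intro j hj
            rw [if_neg (hs j hj)]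
        _ = ∑ j ∈ K, 1 / (⌊1 / ε⌋ : ℝ) := (Finset.sum_filter _ _).symm
        _ = (K.card : ℝ) * (1 / (⌊1 / ε⌋ : ℝ)) := by
            rw [Finset.sum_const, nsmul_eq_mul]
        _ ≤ (⌊c / ε⌋ : ℝ) * (1 / (⌊1 / ε⌋ : ℝ)) := by
            apply mul_le_mul_of_nonneg_right hKflR
            positivity
        _ = (⌊c / ε⌋ : ℝ) / (⌊1 / ε⌋ : ℝ) := by ring
    by_cases hT0 : T = ∅
    · have hall : ∀ j ∈ Finset.univ, ¬ (1 / 2 < x j) := by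
        intro j _ hj
        have : j ∈ T := Finset.mem_filter.2 ⟨Finset.mem_univ j, hj⟩
        simp [hT0] at this
      have := key Finset.univ 1 zero_le_one hsum hall
      calc ∑ j, (fun x : ℝ =>
            if 1 / 2 < x then 1 - (⌊(1 - x) / ε⌋ : ℝ) / (⌊1 / ε⌋ : ℝ)
            else if ε ≤ x then 1 / (⌊1 / ε⌋ : ℝ)
            else 0) (x j) ≤ (⌊(1:ℝ) / ε⌋ : ℝ) / (⌊1 / ε⌋ : ℝ) := this
        _ = 1 := by field_simp
    · -- T = {j0}
      obtain ⟨j0, hj0eq⟩ := Finset.card_eq_one.1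
        (le_antisymm hTcard (Finset.card_pos.2 (Finset.nonempty_iff_ne_empty.2 hT0)))
      have hj0 : ∀ a ∈ T, a ∈ ({j0} : Finset (Fin n)) := by rw [hj0eq]; intro a ha; exact ha
      have hj0T : j0 ∈ T := by rw [hj0eq]; exact Finset.mem_singleton_self j0
      have hj0half : 1 / 2 < x j0 := (Finset.mem_filter.1 hj0T).2
      have hsplit : ∑ j, x j = x j0 + ∑ j ∈ Finset.univ.erase j0, x j := by
        rw [Finset.add_sum_erase _ _ (Finset.mem_univ j0)]
      have hrest : ∑ j ∈ Finset.univ.erase j0, x j ≤ 1 - x j0 := by linarith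
      have herase : ∀ j ∈ Finset.univ.erase j0, ¬ (1 / 2 < x j) := by
        intro j hj hjh
        have hjT : j ∈ T := Finset.mem_filter.2 ⟨Finset.mem_univ j, hjh⟩
        have := hj0 j hjT
        rw [Finset.mem_singleton] at this
        exact (Finset.mem_erase.1 hj).1 this
      have h1x0 : (0:ℝ) ≤ 1 - x j0 := by linarith [(hx j0).2]
      have hkey := key (Finset.univ.erase j0) (1 - x j0) h1x0 hrest herase
      have hsum_split : ∑ j, (fun x : ℝ =>
            if 1 / 2 < x then 1 - (⌊(1 - x) / ε⌋ : ℝ) / (⌊1 / ε⌋ : ℝ)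
            else if ε ≤ x then 1 / (⌊1 / ε⌋ : ℝ)
            else 0) (x j)
          = (1 - (⌊(1 - x j0) / ε⌋ : ℝ) / (⌊1 / ε⌋ : ℝ)) +
            ∑ j ∈ Finset.univ.erase j0, (if 1 / 2 < x j then
              1 - (⌊(1 - x j) / ε⌋ : ℝ) / (⌊1 / ε⌋ : ℝ)
              else if ε ≤ x j then 1 / (⌊1 / ε⌋ : ℝ) else 0) := by
        rw [← Finset.add_sum_erase _ _ (Finset.mem_univ j0)]
        simp only [if_pos hj0half]
      rw [hsum_split]
      have : (1 - (⌊(1 - x j0) / ε⌋ : ℝ) / (⌊1 / ε⌋ : ℝ)) +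
          (⌊(1 - x j0) / ε⌋ : ℝ) / (⌊1 / ε⌋ : ℝ) = 1 := by ring
      linarith [hkey]
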